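/- With the same setup (g a unit of Z/tZ of order d, sequences c^n_k of length d^n t with c^n_k(b_n) = g^{a_1+···+a_n}(k + a_1 + b_0) mod t), for every fixed k and every α ∈ Z/tZ, the number of indices b_n ∈ {0,...,d^n t - 1} with c^n_k(b_n) = α is exactly d^n. -/

import Mathlib

/-- Second construction, occurrence count: for g a unit of ℤ/tℤ of order d,
each value α ∈ ℤ/tℤ is taken by the sequence
c^n_k(b) = g^{a₁+⋯+aₙ}·(k + a₁ + b₀) (with b = (∑ⱼ aⱼ d^{j-1})·t + b₀ the digit
decomposition of the index b ∈ {0,…,dⁿt−1}) exactly dⁿ times. -/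
theorem second_construction_count (t : ℕ) (ht : 0 < t) (g : (ZMod t)ˣ)
    (d : ℕ) (hd : orderOf g = d) (n : ℕ) (hn : 1 ≤ n) (k α : ZMod t) :
    (Finset.univ.filter (fun b : Fin (d ^ n * t) =>
      (g : ZMod t) ^ (∑ j ∈ Finset.range n, b.val / t / d ^ j % d) *
        (k + ((b.val / t % d : ℕ) : ZMod t) + ((b.val % t : ℕ) : ZMod t)) = α)).card
      = d ^ n := by
  haveI : NeZero t := ⟨ht.ne'⟩
  classical
  set S : ℕ → ℕ := fun q => ∑ j ∈ Finset.range n, q / d ^ j % d with hS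
  set r0 : ℕ → ZMod t := fun q =>
    ((g⁻¹ ^ S q : (ZMod t)ˣ) : ZMod t) * α - k - ((q % d : ℕ) : ZMod t) with hr0
  have hdiv : ∀ q v : ℕ, v < t → (q * t + v) / t = q := by
    intro q v hv
    rw [mul_comm, Nat.mul_add_div ht, Nat.div_eq_of_lt hv, Nat.add_zero]
  have hmod : ∀ q v : ℕ, v < t → (q * t + v) % t = v := by
    intro q v hv
    rw [Nat.add_mod, Nat.mul_mod_left, Nat.zero_add, Nat.mod_mod_of_dvd _ dvd_rfl, Nat.mod_eq_of_lt hv]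
  have hcancel : ∀ s : ℕ, (g : ZMod t) ^ s * ((g⁻¹ ^ s : (ZMod t)ˣ) : ZMod t) = 1 := by
    intro s
    rw [← Units.val_pow_eq_pow_val, ← Units.val_mul, ← mul_pow, mul_inv_cancel, one_pow,
      Units.val_one]
  have key : (Finset.univ.filter (fun b : Fin (d ^ n * t) =>
      (g : ZMod t) ^ (∑ j ∈ Finset.range n, b.val / t / d ^ j % d) *
        (k + ((b.val / t % d : ℕ) : ZMod t) + ((b.val % t : ℕ) : ZMod t)) = α)).card
      = (Finset.univ : Finset (Fin (d ^ n))).card := by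
    apply Finset.card_nbij'
      (i := fun b : Fin (d ^ n * t) => (⟨b.val / t,
        (Nat.div_lt_iff_lt_mul ht).2 b.isLt⟩ : Fin (d ^ n)))
      (j := fun q : Fin (d ^ n) => (⟨q.val * t + (r0 q.val).val, by
        calc q.val * t + (r0 q.val).val < q.val * t + t := by
              exact Nat.add_lt_add_left (ZMod.val_lt _) _
          _ = (q.val + 1) * t := by ring
          _ ≤ d ^ n * t := Nat.mul_le_mul_right _ q.isLt⟩ : Fin (d ^ n * t)))
    · intro b hb
      exact Finset.mem_univ _
    · intro q hq
      simp only [Finset.mem_coe, Finset.mem_filter, Finset.mem_univ, true_and]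
      have hv : (r0 q.val).val < t := ZMod.val_lt _
      rw [hdiv _ _ hv, hmod _ _ hv]
      have hvc : (((r0 q.val).val : ℕ) : ZMod t) = r0 q.val := by
        simp [ZMod.natCast_val, ZMod.cast_id]
      rw [hvc, hr0]
      simp only
      have h1 : k + ((q.val % d : ℕ) : ZMod t) +
          (((g⁻¹ ^ S q.val : (ZMod t)ˣ) : ZMod t) * α - k - ((q.val % d : ℕ) : ZMod t))
          = ((g⁻¹ ^ S q.val : (ZMod t)ˣ) : ZMod t) * α := by ring
      rw [h1, ← mul_assoc, hcancel, one_mul]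
    · intro b hb
      simp only [Finset.mem_coe, Finset.mem_filter, Finset.mem_univ, true_and] at hb
      apply Fin.ext
      simp only
      have hrv : r0 (b.val / t) = ((b.val % t : ℕ) : ZMod t) := by
        rw [hr0]
        simp only
        have h2 : ((g⁻¹ ^ S (b.val / t) : (ZMod t)ˣ) : ZMod t) * α
            = k + ((b.val / t % d : ℕ) : ZMod t) + ((b.val % t : ℕ) : ZMod t) := by
          rw [← hb, ← mul_assoc, mul_comm ((g⁻¹ ^ S (b.val / t) : (ZMod t)ˣ) : ZMod t),
            hcancel, one_mul]
        rw [h2]; ring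
      rw [hrv, ZMod.val_natCast, Nat.mod_mod_of_dvd _ dvd_rfl, Nat.div_add_mod']
    · intro q hq
      apply Fin.ext
      simp only
      exact hdiv _ _ (ZMod.val_lt _)
  rw [key, Finset.card_univ, Fintype.card_fin]
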